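/- Let a(h,k) = |ψ(h,k)|. Then a(0,0) = 1, and for all natural numbers h ≤ k with k ≥ 1, a(h,k) = 2(k−h)·a(0,k−1) + 1. Moreover, for all k, a(0,k) = ∑_{ℓ=0}^{k} 2^k·k!/(2^ℓ·ℓ!) = ⌊2^k·k!·√e⌋. -/

import Mathlib

/-- S⁻¹: move the last letter of a nonempty word to the front. -/
def sInv (w : List ℕ) : List ℕ := w.rotate (w.length - 1)

/-- Apply a substitution `f` letterwise to a word (the morphism determined by `f`). -/
def applyM (f : ℕ → List ℕ) (w : List ℕ) : List ℕ := (w.map f).flatten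

/-- Fuel-indexed approximation of the morphism φ: `phiAux n` agrees with φ on all
letters `c < n`.  (Computing φ^c(00) only uses φ on letters smaller than `c`, so the
recursion is well-founded in the fuel.) -/
def phiAux : ℕ → ℕ → List ℕ
  | 0, _ => []
  | n + 1, c => sInv ((applyM (phiAux n))^[c] [0, 0]) ++ [c + 1]

/-- The morphism φ on letters: φ(h) = S⁻¹(φ^h(00))·(h+1).
In particular φ(0) = 001 and φ(1) = 1001002. -/
def phi (c : ℕ) : List ℕ := phiAux (c + 1) c

/-- The morphism φ on words. -/
def phiW (w : List ℕ) : List ℕ := applyM phi w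

/-- ψ(h,k) = φ^(k−h)(h). -/
def psi (h k : ℕ) : List ℕ := phiW^[k - h] [h]

/-- a(h,k) = |ψ(h,k)|. -/
def a (h k : ℕ) : ℕ := (psi h k).length

lemma applyM_append (f : ℕ → List ℕ) (u v : List ℕ) :
    applyM f (u ++ v) = applyM f u ++ applyM f v := by simp [applyM]

lemma applyM_congr {f g : ℕ → List ℕ} {w : List ℕ} (h : ∀ x ∈ w, f x = g x) :
    applyM f w = applyM g w := by
  unfold applyM; rw [List.map_congr_left h]

lemma mem_applyM {f : ℕ → List ℕ} {w : List ℕ} {x : ℕ} :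
    x ∈ applyM f w ↔ ∃ c ∈ w, x ∈ f c := by simp [applyM]

/-- letters bound for the fueled iterates, given the bound on letters of `phiAux n`. -/
lemma iter_letters (f : ℕ → List ℕ) (H : ∀ c x, x ∈ f c → x ≤ c + 1) :
    ∀ j x, x ∈ (applyM f)^[j] [0, 0] → x ≤ j := by
  intro j
  induction j with
  | zero => intro x hx; simp at hx; omega
  | succ j ih =>
    intro x hx
    rw [Function.iterate_succ_apply'] at hx
    rcases mem_applyM.1 hx with ⟨c, hc, hxc⟩
    exact le_trans (H c x hxc) (by have := ih c hc; omega)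

lemma phiAux_letters : ∀ n c x, x ∈ phiAux n c → x ≤ c + 1 := by
  intro n
  induction n with
  | zero => intro c x hx; simp [phiAux] at hx
  | succ n ih =>
    intro c x hx
    simp only [phiAux, sInv, List.mem_append, List.mem_rotate, List.mem_singleton] at hx
    rcases hx with hx | hx
    · exact le_trans (iter_letters _ ih c x hx) (by omega)
    · omega

lemma phiAux_stab : ∀ c m n, c < m → c < n → phiAux m c = phiAux n c := by
  intro c
  induction c using Nat.strong_induction_on with
  | _ c IH =>
    intro m n hm hn
    obtain ⟨m', rfl⟩ : ∃ m', m = m' + 1 := ⟨m - 1, by omega⟩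
    obtain ⟨n', rfl⟩ : ∃ n', n = n' + 1 := ⟨n - 1, by omega⟩
    simp only [phiAux]
    have key : ∀ j, j ≤ c → (applyM (phiAux m'))^[j] [0, 0] = (applyM (phiAux n'))^[j] [0, 0] := by
      intro j
      induction j with
      | zero => intro _; rfl
      | succ j ihj =>
        intro hj
        rw [Function.iterate_succ_apply', Function.iterate_succ_apply', ihj (by omega)]
        refine applyM_congr ?_
        intro x hx
        have hxj : x ≤ j := iter_letters _ (phiAux_letters n') j x hx
        exact IH x (by omega) m' n' (by omega) (by omega)
    rw [key c le_rfl]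

lemma phiAux_eq_phi {c n : ℕ} (h : c < n) : phiAux n c = phi c :=
  phiAux_stab c n (c + 1) h (by omega)

lemma phi_letters {c x : ℕ} (h : x ∈ phi c) : x ≤ c + 1 := phiAux_letters (c + 1) c x h

lemma phiW_iter_letters : ∀ j x, x ∈ phiW^[j] [0, 0] → x ≤ j :=
  iter_letters phi (fun c x h => phi_letters h)

lemma phiAux_iter_eq (c : ℕ) : ∀ j, j ≤ c →
    (applyM (phiAux c))^[j] [0, 0] = phiW^[j] [0, 0] := by
  intro j
  induction j with
  | zero => intro _; rfl
  | succ j ihj =>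
    intro hj
    rw [Function.iterate_succ_apply', Function.iterate_succ_apply', ihj (by omega)]
    refine applyM_congr ?_
    intro x hx
    exact phiAux_eq_phi (lt_of_le_of_lt (phiW_iter_letters j x hx) hj)

lemma phi_eq (c : ℕ) : phi c = sInv (phiW^[c] [0, 0]) ++ [c + 1] := by
  show phiAux (c + 1) c = _
  simp only [phiAux]
  rw [phiAux_iter_eq c c le_rfl]

lemma phiW_append (u v : List ℕ) : phiW (u ++ v) = phiW u ++ phiW v := applyM_append _ u v

lemma phiW_iter_append (d : ℕ) : ∀ u v : List ℕ,
    phiW^[d] (u ++ v) = phiW^[d] u ++ phiW^[d] v := by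
  induction d with
  | zero => intro u v; rfl
  | succ d ih => intro u v; rw [Function.iterate_succ_apply, Function.iterate_succ_apply,
      Function.iterate_succ_apply, phiW_append, ih]

lemma len_iter_sInv (d : ℕ) (w : List ℕ) :
    (phiW^[d] (sInv w)).length = (phiW^[d] w).length := by
  unfold sInv
  rw [List.rotate_eq_drop_append_take (by omega)]
  conv_rhs => rw [← List.take_append_drop (w.length - 1) w]
  rw [phiW_iter_append, phiW_iter_append]
  simp [Nat.add_comm]

lemma phiW_single (h : ℕ) : phiW [h] = phi h := by simp [phiW, applyM]

lemma len_rec (h d : ℕ) : (phiW^[d + 1] [h]).length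
    = 2 * (phiW^[h + d] [0]).length + (phiW^[d] [h + 1]).length := by
  rw [Function.iterate_succ_apply, phiW_single, phi_eq h]
  rw [phiW_iter_append, List.length_append, len_iter_sInv]
  have : phiW^[d] (phiW^[h] [0, 0]) = phiW^[h + d] [0] ++ phiW^[h + d] [0] := by
    rw [← Function.iterate_add_apply, show ([0,0] : List ℕ) = [0] ++ [0] from rfl,
      phiW_iter_append, Nat.add_comm d h]
  rw [this, List.length_append]
  ring

lemma len_main : ∀ d h : ℕ, (phiW^[d + 1] [h]).length
    = 2 * (d + 1) * (phiW^[h + d] [0]).length + 1 := by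
  intro d
  induction d with
  | zero => intro h; rw [len_rec]; simp
  | succ d ih =>
    intro h
    rw [len_rec h (d + 1), ih (h + 1)]
    have : h + 1 + d = h + (d + 1) := by omega
    rw [this]
    ring

lemma a_zero (k : ℕ) : a 0 k = (phiW^[k] [0]).length := by simp [a, psi]

lemma a_rec (k : ℕ) : a 0 (k + 1) = 2 * (k + 1) * a 0 k + 1 := by
  rw [a_zero, a_zero, len_main k 0, Nat.zero_add]

/-- a(0,0) = 1; for h ≤ k with k ≥ 1, a(h,k) = 2(k−h)·a(0,k−1) + 1; and
a(0,k) = ∑_{ℓ=0}^{k} 2^k·k!/(2^ℓ·ℓ!) = ⌊2^k·k!·√e⌋. -/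
theorem a_recurrence_and_formula :
    a 0 0 = 1 ∧
    (∀ h k : ℕ, h ≤ k → 1 ≤ k → a h k = 2 * (k - h) * a 0 (k - 1) + 1) ∧
    (∀ k : ℕ, a 0 k = ∑ l ∈ Finset.range (k + 1),
        2 ^ k * Nat.factorial k / (2 ^ l * Nat.factorial l)) ∧
    (∀ k : ℕ, a 0 k =
        ⌊(2 ^ k * Nat.factorial k : ℝ) * Real.sqrt (Real.exp 1)⌋₊) := by
  have h0 : a 0 0 = 1 := rfl
  have h2 : ∀ h k : ℕ, h ≤ k → 1 ≤ k → a h k = 2 * (k - h) * a 0 (k - 1) + 1 := by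
    intro h k hhk hk
    rcases Nat.eq_or_lt_of_le hhk with rfl | hlt
    · simp [a, psi]
    · obtain ⟨d, hd⟩ : ∃ d, k - h = d + 1 := ⟨k - h - 1, by omega⟩
      have : a h k = (phiW^[d + 1] [h]).length := by rw [a, psi, hd]
      rw [this, len_main d h, a_zero]
      have : h + d = k - 1 := by omega
      rw [this, hd]
  have hsum : ∀ k : ℕ, a 0 k = ∑ l ∈ Finset.range (k + 1),
      2 ^ k * Nat.factorial k / (2 ^ l * Nat.factorial l) := by
    intro k
    induction k with
    | zero => simpa using h0
    | succ k ih =>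
      rw [a_rec, ih]
      conv_rhs => rw [Finset.sum_range_succ]
      have hlast : 2 ^ (k+1) * (k+1).factorial / (2 ^ (k+1) * (k+1).factorial) = 1 :=
        Nat.div_self (by positivity)
      rw [hlast, Finset.mul_sum]
      congr 1
      refine Finset.sum_congr rfl ?_
      intro l hl
      have hl' : l ≤ k := by simpa [Nat.lt_succ_iff] using hl
      have hdvd : 2 ^ l * l.factorial ∣ 2 ^ k * k.factorial :=
        mul_dvd_mul (pow_dvd_pow 2 hl') (Nat.factorial_dvd_factorial hl')
      have hnum : 2 ^ (k+1) * (k+1).factorial = 2 * (k+1) * (2 ^ k * k.factorial) := by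
        rw [Nat.factorial_succ, pow_succ]; ring
      rw [hnum, Nat.mul_div_assoc _ hdvd]
  refine ⟨h0, h2, hsum, ?_⟩
  intro k
  have hsqrt : Real.sqrt (Real.exp 1) = Real.exp (1/2 : ℝ) := by
    have he : Real.exp 1 = Real.exp (1/2:ℝ) * Real.exp (1/2:ℝ) := by
      rw [← Real.exp_add]; norm_num
    rw [he, Real.sqrt_mul_self (Real.exp_pos _).le]
  rw [hsqrt]
  set c : ℝ := (2 ^ k * Nat.factorial k : ℝ) with hc
  have hcpos : 0 < c := by positivity
  -- cast of the sum formula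
  have hcast : (a 0 k : ℝ) = ∑ l ∈ Finset.range (k + 1), c * ((1/2:ℝ) ^ l / l.factorial) := by
    rw [hsum k]
    push_cast
    refine Finset.sum_congr rfl ?_
    intro l hl
    have hl' : l ≤ k := by simpa [Nat.lt_succ_iff] using hl
    have hdvd : 2 ^ l * l.factorial ∣ 2 ^ k * k.factorial :=
      mul_dvd_mul (pow_dvd_pow 2 hl') (Nat.factorial_dvd_factorial hl')
    rw [Nat.cast_div hdvd (by positivity)]
    push_cast
    have h2l : ((2:ℝ) ^ l) ≠ 0 := by positivity
    have hlf : ((l.factorial :ℝ)) ≠ 0 := by positivity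
    field_simp
    rw [hc, mul_comm ((2:ℝ)^l), mul_assoc, ← mul_pow]; norm_num
  have hsum_le : (a 0 k : ℝ) ≤ c * Real.exp (1/2 : ℝ) := by
    rw [hcast, ← Finset.mul_sum]
    have := Real.sum_le_exp_of_nonneg (by norm_num : (0:ℝ) ≤ 1/2) (k+1)
    nlinarith [this, hcpos]
  have hupper : c * Real.exp (1/2 : ℝ) < (a 0 k : ℝ) + 1 := by
    have hb := Real.exp_bound (x := (1/2:ℝ)) (by rw [abs_of_nonneg] <;> norm_num)
      (n := k + 2) (by omega)
    have habs : |(1/2:ℝ)| = 1/2 := by rw [abs_of_nonneg] <;> norm_num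
    rw [habs] at hb
    have hsum2 : ∑ m ∈ Finset.range (k+2), (1/2:ℝ) ^ m / m.factorial
        = (∑ m ∈ Finset.range (k+1), (1/2:ℝ) ^ m / m.factorial)
          + (1/2:ℝ) ^ (k+1) / (k+1).factorial := Finset.sum_range_succ _ _
    have hexp_le : Real.exp (1/2:ℝ) ≤ (∑ m ∈ Finset.range (k+1), (1/2:ℝ) ^ m / m.factorial)
        + (1/2:ℝ) ^ (k+1) / (k+1).factorial
        + (1/2:ℝ) ^ (k+2) * ((k+3) / ((k+2).factorial * (k+2))) := by
      have h1 := abs_le.1 hb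
      rw [hsum2] at h1
      push_cast at h1 ⊢
      ring_nf at h1 ⊢
      linarith [h1.2]
    have hP : c * (∑ m ∈ Finset.range (k+1), (1/2:ℝ) ^ m / m.factorial) = (a 0 k : ℝ) := by
      rw [hcast, Finset.mul_sum]
    have ht1 : c * ((1/2:ℝ) ^ (k+1) / (k+1).factorial) = 1 / (2 * (k+1)) := by
      rw [hc, Nat.factorial_succ]
      push_cast
      rw [show ((1:ℝ)/2) ^ (k+1) = 1 / (2 * 2 ^ k) by rw [div_pow, pow_succ]; ring_nf]
      have h1 : ((k.factorial : ℝ)) ≠ 0 := by positivity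
      have h2 : ((2:ℝ) ^ k) ≠ 0 := by positivity
      have h3 : ((k:ℝ) + 1) ≠ 0 := by positivity
      field_simp
    have ht2 : c * ((1/2:ℝ) ^ (k+2) * ((k+3) / ((k+2).factorial * (k+2))))
        = (k+3) / (4 * (k+1) * (k+2) ^ 2) := by
      rw [hc, Nat.factorial_succ, Nat.factorial_succ]
      push_cast
      rw [show ((1:ℝ)/2) ^ (k+2) = 1 / (4 * 2 ^ k) by rw [div_pow, pow_succ, pow_succ]; ring_nf]
      have h1 : ((k.factorial : ℝ)) ≠ 0 := by positivity
      have h2 : ((2:ℝ) ^ k) ≠ 0 := by positivity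
      have h3 : ((k:ℝ) + 1) ≠ 0 := by positivity
      have h4 : ((k:ℝ) + 2) ≠ 0 := by positivity
      field_simp
      ring
    have hsmall : 1 / (2 * ((k:ℝ)+1)) + ((k:ℝ)+3) / (4 * ((k:ℝ)+1) * ((k:ℝ)+2) ^ 2) < 1 := by
      have hk1 : (0:ℝ) < (k:ℝ) + 1 := by positivity
      have hk2 : (0:ℝ) < (k:ℝ) + 2 := by positivity
      rw [div_add_div _ _ (by positivity) (by positivity), div_lt_one (by positivity)]
      nlinarith [sq_nonneg ((k:ℝ)), (Nat.cast_nonneg k : (0:ℝ) ≤ (k:ℝ))]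
    calc c * Real.exp (1/2:ℝ)
        ≤ c * ((∑ m ∈ Finset.range (k+1), (1/2:ℝ) ^ m / m.factorial)
          + (1/2:ℝ) ^ (k+1) / (k+1).factorial
          + (1/2:ℝ) ^ (k+2) * ((k+3) / ((k+2).factorial * (k+2)))) :=
          mul_le_mul_of_nonneg_left hexp_le hcpos.le
      _ = (a 0 k : ℝ) + (1 / (2 * ((k:ℝ)+1)) + ((k:ℝ)+3) / (4 * ((k:ℝ)+1) * ((k:ℝ)+2) ^ 2)) := by
          rw [mul_add, mul_add, hP, ht1, ht2]; push_cast; ring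
      _ < (a 0 k : ℝ) + 1 := by linarith
  symm
  rw [Nat.floor_eq_iff (by positivity)]
  exact ⟨hsum_le, by push_cast; linarith⟩
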